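/- Let Q(v) = v₁² − v₂² − v₃² − v₄² be the quadratic form of signature (1,3) on ℝ⁴. For every v ∈ ℝ⁴ with Q(v) = −1 there exist R, R' ∈ SO(3), and t ∈ ℝ with cosh t ≤ ‖v‖, such that ι(R')·A(t)·ι(R)·v = (0, 0, 0, 1), where ι(R) ∈ GL₄(ℝ) is the block-diagonal matrix fixing the first coordinate and acting by R on the last three coordinates, A(t) ∈ GL₄(ℝ) acts on the first two coordinates by [[cosh t, sinh t],[sinh t, cosh t]] and as the identity on the last two, and ‖v‖ is the Euclidean norm. -/

import Mathlib

/-- The block-diagonal action of a `3×3` matrix on `ℝ⁴`, fixing the first coordinate and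
acting on the last three coordinates. -/
def iotaAct (R : Matrix (Fin 3) (Fin 3) ℝ) (v : Fin 4 → ℝ) : Fin 4 → ℝ :=
  ![v 0,
    R 0 0 * v 1 + R 0 1 * v 2 + R 0 2 * v 3,
    R 1 0 * v 1 + R 1 1 * v 2 + R 1 2 * v 3,
    R 2 0 * v 1 + R 2 1 * v 2 + R 2 2 * v 3]

/-- The hyperbolic boost `A(t)`, acting on the first two coordinates of `ℝ⁴` by
`[[cosh t, sinh t], [sinh t, cosh t]]` and as the identity on the last two. -/
noncomputable def boostAct (t : ℝ) (v : Fin 4 → ℝ) : Fin 4 → ℝ :=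
  ![Real.cosh t * v 0 + Real.sinh t * v 1,
    Real.sinh t * v 0 + Real.cosh t * v 1,
    v 2, v 3]

set_option maxHeartbeats 1000000 in
/-- **Claim 4.29 (hyperbolic regulation).**
For every `v ∈ ℝ⁴` with `Q(v) = v₁² − v₂² − v₃² − v₄² = −1` there are `R, R' ∈ SO(3)` and
`t ∈ ℝ` with `cosh t ≤ ‖v‖` such that `ι(R')·A(t)·ι(R)·v = (0,0,0,1)`. -/
theorem hyperbolic_regulation (v : Fin 4 → ℝ)
    (hv : v 0 ^ 2 - v 1 ^ 2 - v 2 ^ 2 - v 3 ^ 2 = -1) :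
    ∃ (R R' : Matrix (Fin 3) (Fin 3) ℝ) (t : ℝ),
      R.transpose * R = 1 ∧ R.det = 1 ∧
      R'.transpose * R' = 1 ∧ R'.det = 1 ∧
      Real.cosh t ≤ Real.sqrt (∑ i : Fin 4, v i ^ 2) ∧
      iotaAct R' (boostAct t (iotaAct R v)) = ![0, 0, 0, 1] := by
  set a := v 0 with ha
  set b := v 1 with hb
  set c := v 2 with hc
  set d := v 3 with hd
  have hw : b ^ 2 + c ^ 2 + d ^ 2 = a ^ 2 + 1 := by linarith
  set r := Real.sqrt (a ^ 2 + 1) with hrdef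
  have hr2 : r ^ 2 = a ^ 2 + 1 := Real.sq_sqrt (by positivity)
  have hr2' : r ^ 2 = b ^ 2 + c ^ 2 + d ^ 2 := by rw [hr2]; linarith
  have hrpos : 0 < r := Real.sqrt_pos.mpr (by positivity)
  have hrne : r ≠ 0 := ne_of_gt hrpos
  have key : ∃ R : Matrix (Fin 3) (Fin 3) ℝ, R.transpose * R = 1 ∧ R.det = 1 ∧
      iotaAct R v = ![a, r, 0, 0] := by
    rcases eq_or_lt_of_le (by positivity : (0:ℝ) ≤ c ^ 2 + d ^ 2) with hs0 | hspos
    · -- c = d = 0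
      have hc0 : c = 0 := by nlinarith
      have hd0 : d = 0 := by nlinarith
      have hbr : b ^ 2 = r ^ 2 := by nlinarith
      rcases le_or_gt 0 b with hbpos | hbneg
      · have hbr' : b = r := by nlinarith
        refine ⟨1, by simp, by simp, ?_⟩
        funext i; fin_cases i <;>
          simp [iotaAct, Matrix.one_apply, ← ha, ← hb, ← hc, ← hd, hc0, hd0, hbr',
            Matrix.vecHead, Matrix.vecTail]
      · have hbr' : b = -r := by nlinarith
        refine ⟨!![-1,0,0;0,-1,0;0,0,1], ?_, ?_, ?_⟩
        · ext i j; fin_cases i <;> fin_cases j <;>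
            simp [Matrix.mul_apply, Fin.sum_univ_succ, Matrix.one_apply]
        · simp [Matrix.det_fin_three]
        · funext i; fin_cases i <;>
            simp [iotaAct, ← ha, ← hb, ← hc, ← hd, hc0, hd0, hbr',
              Matrix.vecHead, Matrix.vecTail]
    · set s := Real.sqrt (c ^ 2 + d ^ 2) with hsdef
      have hs2 : s ^ 2 = c ^ 2 + d ^ 2 := Real.sq_sqrt (by positivity)
      have hsp : 0 < s := Real.sqrt_pos.mpr hspos
      have hsne : s ≠ 0 := ne_of_gt hsp
      refine ⟨!![b/r, c/r, d/r; 0, -d/s, c/s; s/r, -(b*c)/(r*s), -(b*d)/(r*s)], ?_, ?_, ?_⟩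
      · ext i j; fin_cases i <;> fin_cases j <;>
          · simp [Matrix.mul_apply, Fin.sum_univ_succ, Matrix.one_apply]
            field_simp
            first
            | ring1
            | linarith [hr2', hs2]
            | nlinarith [hr2', hs2]
            | linear_combination (-(c^2*r^2*s^2)) * hr2' + ((c^2-r^2)*r^2*s^2) * hs2
            | linear_combination (-(d^2*r^2*s^2)) * hr2' + ((d^2-r^2)*r^2*s^2) * hs2
            | linear_combination c*d*r^2*s^2 * hs2 - c*d*r^2*s^2 * hr2'
            | linear_combination (-(c^2*s^2)) * hr2' + ((c^2-r^2)*s^2) * hs2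
            | linear_combination (-(d^2*s^2)) * hr2' + ((d^2-r^2)*s^2) * hs2
            | linear_combination c*d*s^2 * hs2 - c*d*s^2 * hr2'
            | linear_combination (-(c*d)) * (hr2' - hs2)
      · simp [Matrix.det_fin_three]
        field_simp
        first
        | ring1
        | linarith [hr2', hs2]
        | nlinarith [hr2', hs2]
        | linear_combination b * hs2
        | linear_combination b*r * hs2
        | linear_combination b*s * hs2
        | linear_combination b*r*s * hs2
        | linear_combination b*r^2*s * hs2
        | linear_combination (-(r^4*s^4)) * hr2' + (-(b^2*r^4*s^2)) * hs2
      · funext i; fin_cases i <;>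
          simp [iotaAct, ← hb, ← hc, ← hd, Matrix.vecHead, Matrix.vecTail] <;>
          (try field_simp) <;>
          first
            | ring1
            | linarith [hr2', hs2]
            | nlinarith [hr2', hs2]
            | linear_combination -hr2'
            | linear_combination b * hs2
            | linear_combination b*r * hs2
            | linear_combination b*s * hs2
            | linear_combination b*r*s * hs2
            | linear_combination s*b*r*(r-1) * hs2
            | linear_combination b*(r-1) * hs2
            | linear_combination s*b*r^2 * hs2
  obtain ⟨R, hR1, hR2, hRv⟩ := key
  refine ⟨R, !![0,1,0;0,0,1;1,0,0], -Real.arsinh a, hR1, hR2, ?_, ?_, ?_, ?_⟩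
  · ext i j; fin_cases i <;> fin_cases j <;>
      simp [Matrix.mul_apply, Fin.sum_univ_succ, Matrix.one_apply]
  · simp [Matrix.det_fin_three]
  · rw [Real.cosh_neg, Real.cosh_arsinh]
    apply Real.sqrt_le_sqrt
    rw [Fin.sum_univ_four]
    nlinarith
  · have hcosh : Real.cosh (-Real.arsinh a) = r := by
      rw [Real.cosh_neg, Real.cosh_arsinh, hrdef]; ring_nf
    have hsinh : Real.sinh (-Real.arsinh a) = -a := by
      rw [Real.sinh_neg, Real.sinh_arsinh]
    rw [hRv]
    funext i; fin_cases i <;>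
      simp [iotaAct, boostAct, hcosh, hsinh, Matrix.vecHead, Matrix.vecTail] <;>
      first
      | ring1
      | nlinarith [hr2]
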